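/- Let Φ(A) = λ(frac(A)) be the coverage function on Borel subsets of ℝ as above. For every positive integer q and every normalized coverage function ψ: 2^{[q]} → ℝ (ψ(∅)=0, ψ([q])=1, and ψ satisfies the k-alternating inequalities for every k), there exists a Borel partition Q1, …, Qq of ℝ such that ψ(I) = Φ(∪_{i∈I} Qi) for every I ⊆ [q]. That is, Φ is universal for finite normalized coverage functions. -/

import Mathlib

open Finset MeasureTheory

/-- `Φ(A)` is the Lebesgue measure of the set of fractional parts of elements of `A`. -/
noncomputable def fracMeasure (A : Set ℝ) : ℝ := (volume (Int.fract '' A)).toReal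

lemma sum_pow_neg_one_real {α : Type*} [DecidableEq α] (x : Finset α) :
    ∑ m ∈ x.powerset, (-1:ℝ)^m.card = if x = ∅ then 1 else 0 := by
  have h := Finset.sum_powerset_neg_one_pow_card (x := x)
  have := congrArg (fun z : ℤ => (z : ℝ)) h
  push_cast at this
  convert this using 2

lemma inner_mobius {α : Type*} [DecidableEq α] (S B : Finset α) (hB : B ⊆ S) :
    ∑ A ∈ S.powerset.filter (fun A => B ⊆ A), (-1:ℝ)^((A\B).card)
      = if B = S then 1 else 0 := by
  rw [show ∑ A ∈ S.powerset.filter (fun A => B ⊆ A), (-1:ℝ)^((A\B).card)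
      = ∑ C ∈ (S\B).powerset, (-1:ℝ)^C.card from ?_, sum_pow_neg_one_real]
  · congr 1
    rw [eq_iff_iff, Finset.sdiff_eq_empty_iff_subset]
    constructor
    · exact fun h => subset_antisymm hB h
    · exact fun h => h ▸ subset_refl _
  · refine Finset.sum_nbij' (fun A => A \ B) (fun C => B ∪ C) ?_ ?_ ?_ ?_ ?_
    · intro A hA
      simp only [mem_filter, mem_powerset] at hA
      exact Finset.mem_powerset.2 (Finset.sdiff_subset_sdiff hA.1 (subset_refl _))
    · intro C hC
      simp only [mem_powerset] at hC
      simp only [mem_filter, mem_powerset]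
      refine ⟨Finset.union_subset hB (hC.trans Finset.sdiff_subset), Finset.subset_union_left⟩
    · intro A hA
      simp only [mem_filter, mem_powerset] at hA
      exact Finset.union_sdiff_of_subset hA.2
    · intro C hC
      simp only [mem_powerset] at hC
      exact Finset.union_sdiff_cancel_left (Finset.subset_sdiff.1 hC).2.symm
    · intro A hA; rfl

lemma mobius_sum {α : Type*} [DecidableEq α] (h : Finset α → ℝ) (S : Finset α) :
    ∑ A ∈ S.powerset, ∑ B ∈ A.powerset, (-1:ℝ)^((A\B).card) * h B = h S := by
  rw [Finset.sum_comm' (t' := S.powerset)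
      (s' := fun B => S.powerset.filter (fun A => B ⊆ A)) ?_]
  · have step : ∀ B ∈ S.powerset,
        (∑ A ∈ S.powerset.filter (fun A => B ⊆ A), (-1:ℝ)^((A\B).card) * h B)
          = (if B = S then 1 else 0) * h B := by
      intro B hB
      rw [← Finset.sum_mul, inner_mobius S B (Finset.mem_powerset.1 hB)]
    rw [Finset.sum_congr rfl step]
    simp [Finset.sum_ite_eq' S.powerset S, Finset.mem_powerset_self]
  · intro A B
    simp only [mem_powerset, mem_filter, mem_powerset]
    constructor
    · rintro ⟨h1, h2⟩; exact ⟨⟨h1, h2⟩, h2.trans h1⟩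
    · rintro ⟨⟨h1, h2⟩, h3⟩; exact ⟨h1, h2⟩
lemma sdiff_bij_sum {α : Type*} [DecidableEq α] (A : Finset α) (f : Finset α → ℝ) :
    ∑ B ∈ A.powerset, f (A \ B) = ∑ C ∈ A.powerset, f C := by
  refine Finset.sum_nbij' (fun B => A \ B) (fun C => A \ C) ?_ ?_ ?_ ?_ ?_
  · intro B hB; exact Finset.mem_powerset.2 Finset.sdiff_subset
  · intro C hC; exact Finset.mem_powerset.2 Finset.sdiff_subset
  · intro B hB; exact Finset.sdiff_sdiff_eq_self (Finset.mem_powerset.1 hB)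
  · intro C hC; exact Finset.sdiff_sdiff_eq_self (Finset.mem_powerset.1 hC)
  · intro B hB; rfl

noncomputable def cCoef {q : ℕ} (ψ : Finset (Fin q) → ℝ) (A : Finset (Fin q)) : ℝ :=
  ∑ B ∈ A.powerset, (-1:ℝ)^((A\B).card) * (1 - ψ Bᶜ)

lemma cCoef_nonneg {q : ℕ} (ψ : Finset (Fin q) → ℝ) (hψ1 : ψ univ = 1)
    (hψalt : ∀ k : ℕ, 0 < k → ∀ A : Fin (k + 1) → Finset (Fin q),
      ∑ K : Finset (Fin k), (-1 : ℝ) ^ K.card *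
        ψ (A 0 ∪ K.sup (fun i => A i.succ)) ≤ 0)
    (A : Finset (Fin q)) : 0 ≤ cCoef ψ A := by
  rcases A.eq_empty_or_nonempty with rfl | hA
  · simp [cCoef, hψ1, Finset.compl_empty]
  · have hsplit : cCoef ψ A = (∑ B ∈ A.powerset, (-1:ℝ)^((A\B).card))
        - ∑ B ∈ A.powerset, (-1:ℝ)^((A\B).card) * ψ Bᶜ := by
      unfold cCoef
      rw [← Finset.sum_sub_distrib]
      exact Finset.sum_congr rfl (fun B _ => by ring)
    have h1 : (∑ B ∈ A.powerset, (-1:ℝ)^((A\B).card)) = 0 := by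
      rw [sdiff_bij_sum A (fun C => (-1:ℝ)^C.card), sum_pow_neg_one_real,
        if_neg (Finset.nonempty_iff_ne_empty.1 hA)]
    -- rewrite the second sum as a sum over K ⊆ A of (-1)^|K| ψ(Aᶜ ∪ K)
    have h2 : ∑ B ∈ A.powerset, (-1:ℝ)^((A\B).card) * ψ Bᶜ
        = ∑ K ∈ A.powerset, (-1:ℝ)^(K.card) * ψ (Aᶜ ∪ K) := by
      have hcongr : ∑ B ∈ A.powerset, (-1:ℝ)^((A\B).card) * ψ Bᶜ
          = ∑ B ∈ A.powerset, (fun C => (-1:ℝ)^C.card * ψ (Aᶜ ∪ C)) (A \ B) := by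
        refine Finset.sum_congr rfl (fun B hB => ?_)
        have hBA := Finset.mem_powerset.1 hB
        simp only []
        congr 2
        ext i
        simp only [Finset.mem_compl, Finset.mem_union, Finset.mem_sdiff]
        constructor
        · intro h
          by_cases hiA : i ∈ A
          · exact Or.inr ⟨hiA, h⟩
          · exact Or.inl hiA
        · rintro (h | ⟨_, h⟩) hB2
          · exact h (hBA hB2)
          · exact h hB2
      rw [hcongr, sdiff_bij_sum A (fun C => (-1:ℝ)^C.card * ψ (Aᶜ ∪ C))]
    -- the alternating hypothesis applied with singletons of A
    have h3 : ∑ K ∈ A.powerset, (-1:ℝ)^(K.card) * ψ (Aᶜ ∪ K) ≤ 0 := by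
      set k := A.card with hk
      have hkpos : 0 < k := Finset.card_pos.2 hA
      set emb := A.orderEmbOfFin (k := k) rfl with hemb
      have := hψalt k hkpos (Fin.cases Aᶜ (fun i => {emb i}))
      simp only [Fin.cases_zero, Fin.cases_succ] at this
      refine le_trans (le_of_eq ?_) this
      have hmem : ∀ i : Fin k, emb i ∈ A := fun i => A.orderEmbOfFin_mem rfl i
      have hsurj : ∀ a ∈ A, ∃ i, emb i = a := by
        intro a ha
        have hr := Finset.range_orderEmbOfFin A (k := k) rfl
        have : a ∈ Set.range ⇑(A.orderEmbOfFin (k := k) rfl) := by rw [hr]; exact ha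
        exact this
      have himg : ∀ K ∈ A.powerset, (univ.filter (fun i => emb i ∈ K)).image emb = K := by
        intro K hK
        have hKA := Finset.mem_powerset.1 hK
        ext a
        simp only [Finset.mem_image, Finset.mem_filter, Finset.mem_univ, true_and]
        constructor
        · rintro ⟨i, hi, rfl⟩; exact hi
        · intro ha
          obtain ⟨i, rfl⟩ := hsurj a (hKA ha)
          exact ⟨i, ha, rfl⟩
      have hcard : ∀ K ∈ A.powerset, (univ.filter (fun i => emb i ∈ K)).card = K.card := by
        intro K hK
        conv_rhs => rw [← himg K hK]
        exact (Finset.card_image_of_injective _ emb.injective).symm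
      refine Finset.sum_nbij' (i := fun K => univ.filter (fun i => emb i ∈ K))
        (j := fun K => K.image emb) ?_ ?_ ?_ ?_ ?_
      · intro K _; exact Finset.mem_univ _
      · intro K _
        exact Finset.mem_powerset.2 (fun a ha => by
          obtain ⟨i, _, rfl⟩ := Finset.mem_image.1 ha; exact hmem i)
      · intro K hK; exact himg K hK
      · intro K _
        ext i
        simp only [Finset.mem_filter, Finset.mem_univ, true_and, Finset.mem_image]
        constructor
        · rintro ⟨j, hj, hji⟩
          rwa [← emb.injective hji]
        · intro hi; exact ⟨i, hi, rfl⟩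
      · intro K hK
        rw [Finset.sup_singleton_apply, himg K hK, hcard K hK]
    linarith [hsplit, h1, h2, h3]


noncomputable def enc {q : ℕ} (A : Finset (Fin q)) : ℕ :=
  (Fintype.equivFin (Finset (Fin q)) A : ℕ)

lemma enc_inj {q : ℕ} : Function.Injective (enc (q := q)) := by
  intro a b h
  exact (Fintype.equivFin (Finset (Fin q))).injective (Fin.ext h)

noncomputable def lft {q : ℕ} (c : Finset (Fin q) → ℝ) (A : Finset (Fin q)) : ℝ :=
  ∑ B ∈ univ.filter (fun B => enc B < enc A), c B

noncomputable def Jv {q : ℕ} (c : Finset (Fin q) → ℝ) (A : Finset (Fin q)) : Set ℝ :=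
  Set.Ico (lft c A) (lft c A + c A)

section
variable {q : ℕ} {c : Finset (Fin q) → ℝ}

lemma lft_nonneg (hc0 : ∀ A, 0 ≤ c A) (A : Finset (Fin q)) : 0 ≤ lft c A :=
  Finset.sum_nonneg (fun B _ => hc0 B)

lemma lft_add_le (hc0 : ∀ A, 0 ≤ c A) {A B : Finset (Fin q)} (h : enc A < enc B) :
    lft c A + c A ≤ lft c B := by
  have hA : A ∉ univ.filter (fun C => enc C < enc A) := by simp
  have hsub : insert A (univ.filter (fun C => enc C < enc A))
      ⊆ univ.filter (fun C => enc C < enc B) := by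
    intro C hC
    rcases Finset.mem_insert.1 hC with rfl | hC
    · simp [h]
    · simp only [mem_filter, mem_univ, true_and] at hC ⊢
      exact hC.trans h
  calc lft c A + c A = ∑ C ∈ insert A (univ.filter (fun C => enc C < enc A)), c C := by
        rw [Finset.sum_insert hA, lft]; ring
    _ ≤ lft c B := Finset.sum_le_sum_of_subset_of_nonneg hsub (fun C _ _ => hc0 C)

lemma lft_add_le_one (hc0 : ∀ A, 0 ≤ c A) (hc1 : ∑ A : Finset (Fin q), c A = 1)
    (A : Finset (Fin q)) : lft c A + c A ≤ 1 := by
  have hA : A ∉ univ.filter (fun C => enc C < enc A) := by simp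
  calc lft c A + c A = ∑ C ∈ insert A (univ.filter (fun C => enc C < enc A)), c C := by
        rw [Finset.sum_insert hA, lft]; ring
    _ ≤ ∑ A : Finset (Fin q), c A :=
        Finset.sum_le_sum_of_subset_of_nonneg (Finset.subset_univ _) (fun C _ _ => hc0 C)
    _ = 1 := hc1

lemma Jv_subset (hc0 : ∀ A, 0 ≤ c A) (hc1 : ∑ A : Finset (Fin q), c A = 1)
    (A : Finset (Fin q)) : Jv c A ⊆ Set.Ico 0 1 := by
  intro x hx
  exact ⟨le_trans (lft_nonneg hc0 A) hx.1, lt_of_lt_of_le hx.2 (lft_add_le_one hc0 hc1 A)⟩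

lemma Jv_disjoint (hc0 : ∀ A, 0 ≤ c A) {A B : Finset (Fin q)} (h : A ≠ B) :
    Disjoint (Jv c A) (Jv c B) := by
  have henc : enc A ≠ enc B := fun he => h (enc_inj he)
  rcases henc.lt_or_gt with hlt | hlt
  · rw [Set.disjoint_left]
    intro x hxA hxB
    exact absurd (lt_of_lt_of_le hxA.2 (lft_add_le hc0 hlt)) (not_lt.2 hxB.1)
  · rw [Set.disjoint_right]
    intro x hxB hxA
    exact absurd (lt_of_lt_of_le hxB.2 (lft_add_le hc0 hlt)) (not_lt.2 hxA.1)

lemma Jv_volume (A : Finset (Fin q)) : volume (Jv c A) = ENNReal.ofReal (c A) := by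
  rw [Jv, Real.volume_Ico, add_sub_cancel_left]

lemma Jv_empty (hce : c ∅ = 0) : Jv c (∅ : Finset (Fin q)) = ∅ := by
  rw [Jv, hce, add_zero, Set.Ico_self]

end

noncomputable def pickF {q : ℕ} (i0 : Fin q) (A : Finset (Fin q)) (n : ℤ) : Fin q :=
  if h : A.Nonempty then
    A.toList.get ⟨n.toNat % A.card, by
      rw [Finset.length_toList]; exact Nat.mod_lt _ (Finset.card_pos.2 h)⟩
  else i0

lemma pickF_mem {q : ℕ} (i0 : Fin q) {A : Finset (Fin q)} (h : A.Nonempty) (n : ℤ) :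
    pickF i0 A n ∈ A := by
  rw [pickF, dif_pos h]
  exact Finset.mem_toList.1 (A.toList.get_mem _)

lemma pickF_spec {q : ℕ} (i0 : Fin q) {A : Finset (Fin q)} {i : Fin q} (h : i ∈ A) :
    ∃ n : ℕ, pickF i0 A (n : ℤ) = i := by
  obtain ⟨m, hm⟩ := List.mem_iff_get.1 (Finset.mem_toList.2 h)
  refine ⟨(m : ℕ), ?_⟩
  rw [pickF, dif_pos ⟨i, h⟩]
  have hlt : (m : ℕ) < A.card := by rw [← Finset.length_toList]; exact m.isLt
  have : (⟨((m : ℕ) : ℤ).toNat % A.card,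
      lt_of_lt_of_le (Nat.mod_lt _ (Finset.card_pos.2 ⟨i, h⟩))
        (le_of_eq (Finset.length_toList A).symm)⟩ :
      Fin A.toList.length) = m := by
    ext
    simp [Nat.mod_eq_of_lt hlt]
  rw [this, hm]

noncomputable def Qset {q : ℕ} (c : Finset (Fin q) → ℝ) (i0 i : Fin q) : Set ℝ :=
  {x | (∃ A : Finset (Fin q), A.Nonempty ∧ Int.fract x ∈ Jv c A ∧ pickF i0 A ⌊x⌋ = i) ∨
       ((∀ A : Finset (Fin q), A.Nonempty → Int.fract x ∉ Jv c A) ∧ i = i0)}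

lemma Qset_meas {q : ℕ} (c : Finset (Fin q) → ℝ) (i0 i : Fin q) :
    MeasurableSet (Qset c i0 i) := by
  have hrw : Qset c i0 i =
      (⋃ A ∈ (univ : Finset (Finset (Fin q))).filter (fun A => A.Nonempty),
        Int.fract ⁻¹' Jv c A ∩ Int.floor ⁻¹' {n : ℤ | pickF i0 A n = i}) ∪
      (if i = i0 then
        (⋃ A ∈ (univ : Finset (Finset (Fin q))).filter (fun A => A.Nonempty),
          Int.fract ⁻¹' Jv c A)ᶜ else ∅) := by
    ext x
    simp only [Qset, Set.mem_setOf_eq, Set.mem_union, Set.mem_iUnion, Set.mem_inter_iff,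
      Set.mem_preimage, Set.mem_compl_iff, mem_filter, mem_univ, true_and, Set.mem_setOf_eq,
      exists_prop]
    constructor
    · rintro (⟨A, hA, hf, hp⟩ | ⟨hall, rfl⟩)
      · exact Or.inl ⟨A, hA, hf, hp⟩
      · refine Or.inr ?_
        rw [if_pos rfl]
        simp only [Set.mem_compl_iff, Set.mem_iUnion, Set.mem_preimage, mem_filter,
          mem_univ, true_and, exists_prop, not_exists, not_and]
        exact hall
    · rintro (⟨A, hA, hf, hp⟩ | h)
      · exact Or.inl ⟨A, hA, hf, hp⟩
      · by_cases hi : i = i0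
        · rw [if_pos hi] at h
          simp only [Set.mem_compl_iff, Set.mem_iUnion, Set.mem_preimage, mem_filter,
            mem_univ, true_and, exists_prop, not_exists, not_and] at h
          exact Or.inr ⟨h, hi⟩
        · rw [if_neg hi] at h
          exact absurd h (Set.notMem_empty x)
  rw [hrw]
  have hmeasJ : ∀ A : Finset (Fin q), MeasurableSet (Int.fract ⁻¹' Jv c A) :=
    fun A => measurable_fract measurableSet_Ico
  refine MeasurableSet.union ?_ ?_
  · refine Finset.measurableSet_biUnion _ (fun A _ => ?_)
    exact (hmeasJ A).inter (Int.measurable_floor (by trivial))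
  · split_ifs
    · exact (Finset.measurableSet_biUnion _ (fun A _ => hmeasJ A)).compl
    · exact MeasurableSet.empty

lemma Qset_disjoint {q : ℕ} (c : Finset (Fin q) → ℝ) (hc0 : ∀ A, 0 ≤ c A) (i0 : Fin q) :
    Pairwise (Function.onFun Disjoint (Qset c i0)) := by
  intro i j hij
  rw [Function.onFun, Set.disjoint_left]
  intro x hxi hxj
  apply hij
  rcases hxi with ⟨A, hA, hfA, hpA⟩ | ⟨hallA, rfl⟩
  · rcases hxj with ⟨B, hB, hfB, hpB⟩ | ⟨hallB, rfl⟩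
    · have hAB : A = B := by
        by_contra hne
        exact Set.disjoint_left.1 (Jv_disjoint hc0 hne) hfA hfB
      rw [← hpA, ← hpB, hAB]
    · exact absurd hfA (hallB A hA)
  · rcases hxj with ⟨B, hB, hfB, hpB⟩ | ⟨hallB, rfl⟩
    · exact absurd hfB (hallA B hB)
    · rfl

lemma Qset_cover {q : ℕ} (c : Finset (Fin q) → ℝ) (i0 : Fin q) :
    (⋃ i, Qset c i0 i) = Set.univ := by
  ext x
  simp only [Set.mem_iUnion, Set.mem_univ, iff_true]
  by_cases h : ∃ A : Finset (Fin q), A.Nonempty ∧ Int.fract x ∈ Jv c A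
  · obtain ⟨A, hA, hf⟩ := h
    exact ⟨pickF i0 A ⌊x⌋, Or.inl ⟨A, hA, hf, rfl⟩⟩
  · push_neg at h
    exact ⟨i0, Or.inr ⟨h, rfl⟩⟩

lemma Qset_image {q : ℕ} (c : Finset (Fin q) → ℝ) (hc0 : ∀ A, 0 ≤ c A)
    (hc1 : ∑ A : Finset (Fin q), c A = 1) (hce : c ∅ = 0) (i0 : Fin q)
    (I : Finset (Fin q)) :
    Int.fract '' (⋃ i ∈ I, Qset c i0 i) =
      (⋃ A ∈ (univ : Finset (Finset (Fin q))).filter (fun A => (A ∩ I).Nonempty), Jv c A)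
      ∪ (if i0 ∈ I then Set.Ico (0:ℝ) 1 \ ⋃ A : Finset (Fin q), Jv c A else ∅) := by
  ext y
  simp only [Set.mem_image, Set.mem_iUnion, Set.mem_union, mem_filter, mem_univ, true_and,
    exists_prop]
  constructor
  · rintro ⟨x, ⟨i, hiI, hx⟩, rfl⟩
    rcases hx with ⟨A, hA, hf, hp⟩ | ⟨hall, rfl⟩
    · exact Or.inl ⟨A, ⟨pickF i0 A ⌊x⌋, Finset.mem_inter.2 ⟨pickF_mem i0 hA _, hp ▸ hiI⟩⟩, hf⟩
    · refine Or.inr ?_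
      rw [if_pos hiI]
      refine ⟨⟨Int.fract_nonneg x, Int.fract_lt_one x⟩, ?_⟩
      simp only [Set.mem_iUnion, not_exists]
      intro A
      rcases A.eq_empty_or_nonempty with rfl | hA
      · rw [Jv_empty hce]; exact Set.notMem_empty _
      · exact hall A hA
  · rintro (⟨A, hAI, hy⟩ | h)
    · obtain ⟨i, hi⟩ := hAI
      have hiA : i ∈ A := (Finset.mem_inter.1 hi).1
      have hiI : i ∈ I := (Finset.mem_inter.1 hi).2
      obtain ⟨n, hn⟩ := pickF_spec i0 hiA
      have hy01 : y ∈ Set.Ico (0:ℝ) 1 := Jv_subset hc0 hc1 A hy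
      have hfy : Int.fract y = y := Int.fract_eq_self.2 ⟨hy01.1, hy01.2⟩
      refine ⟨y + (n : ℤ), ⟨i, hiI, ?_⟩, ?_⟩
      · refine Or.inl ⟨A, ⟨i, hiA⟩, ?_, ?_⟩
        · rwa [Int.fract_add_intCast, hfy]
        · rw [Int.floor_add_intCast, Int.floor_eq_zero_iff.2 hy01, zero_add]
          exact hn
      · rw [Int.fract_add_intCast, hfy]
    · by_cases hi0 : i0 ∈ I
      · rw [if_pos hi0] at h
        have hfy : Int.fract y = y := Int.fract_eq_self.2 ⟨h.1.1, h.1.2⟩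
        refine ⟨y, ⟨i0, hi0, ?_⟩, hfy⟩
        refine Or.inr ⟨fun A hA hmem => ?_, rfl⟩
        refine h.2 ?_
        rw [hfy] at hmem
        exact Set.mem_iUnion.2 ⟨A, hmem⟩
      · rw [if_neg hi0] at h
        exact absurd h (Set.notMem_empty y)

lemma Jv_biUnion_volume {q : ℕ} (c : Finset (Fin q) → ℝ) (hc0 : ∀ A, 0 ≤ c A)
    (F : Finset (Finset (Fin q))) :
    volume (⋃ A ∈ F, Jv c A) = ∑ A ∈ F, ENNReal.ofReal (c A) := by
  have hdis : (↑F : Set (Finset (Fin q))).PairwiseDisjoint (Jv c) :=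
    fun A _ B _ hAB => Jv_disjoint hc0 hAB
  rw [measure_biUnion_finset hdis
    (fun A _ => (measurableSet_Ico : MeasurableSet (Jv c A)))]
  exact Finset.sum_congr rfl (fun A _ => Jv_volume A)

lemma Jv_leftover_null {q : ℕ} (c : Finset (Fin q) → ℝ) (hc0 : ∀ A, 0 ≤ c A)
    (hc1 : ∑ A : Finset (Fin q), c A = 1) :
    volume (Set.Ico (0:ℝ) 1 \ ⋃ A : Finset (Fin q), Jv c A) = 0 := by
  have hU : (⋃ A : Finset (Fin q), Jv c A) = ⋃ A ∈ (univ : Finset (Finset (Fin q))), Jv c A := by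
    simp
  have hvol : volume (⋃ A : Finset (Fin q), Jv c A) = ENNReal.ofReal 1 := by
    rw [hU, Jv_biUnion_volume c hc0, ← ENNReal.ofReal_sum_of_nonneg (fun A _ => hc0 A), hc1]
  have hsub : (⋃ A : Finset (Fin q), Jv c A) ⊆ Set.Ico (0:ℝ) 1 := by
    rw [Set.iUnion_subset_iff]
    exact fun A => Jv_subset hc0 hc1 A
  rw [measure_diff hsub ?_ ?_]
  · rw [hvol, Real.volume_Ico]
    norm_num
  · exact (MeasurableSet.iUnion (fun A => measurableSet_Ico)).nullMeasurableSet
  · rw [hvol]; exact ENNReal.ofReal_ne_top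

lemma Qset_fracMeasure {q : ℕ} (c : Finset (Fin q) → ℝ) (hc0 : ∀ A, 0 ≤ c A)
    (hc1 : ∑ A : Finset (Fin q), c A = 1) (hce : c ∅ = 0) (i0 : Fin q)
    (I : Finset (Fin q)) :
    fracMeasure (⋃ i ∈ I, Qset c i0 i) =
      ∑ A ∈ (univ : Finset (Finset (Fin q))).filter (fun A => (A ∩ I).Nonempty), c A := by
  rw [fracMeasure, Qset_image c hc0 hc1 hce i0 I]
  have hnull : volume (if i0 ∈ I then Set.Ico (0:ℝ) 1 \ ⋃ A : Finset (Fin q), Jv c A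
      else (∅ : Set ℝ)) = 0 := by
    split_ifs
    · exact Jv_leftover_null c hc0 hc1
    · exact measure_empty
  have hmu : volume ((⋃ A ∈ (univ : Finset (Finset (Fin q))).filter
        (fun A => (A ∩ I).Nonempty), Jv c A)
      ∪ (if i0 ∈ I then Set.Ico (0:ℝ) 1 \ ⋃ A : Finset (Fin q), Jv c A else ∅))
      = volume (⋃ A ∈ (univ : Finset (Finset (Fin q))).filter
        (fun A => (A ∩ I).Nonempty), Jv c A) := by
    refine le_antisymm ?_ (measure_mono Set.subset_union_left)
    calc volume _ ≤ volume (⋃ A ∈ (univ : Finset (Finset (Fin q))).filter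
          (fun A => (A ∩ I).Nonempty), Jv c A)
        + volume (if i0 ∈ I then Set.Ico (0:ℝ) 1 \ ⋃ A : Finset (Fin q), Jv c A else ∅) :=
          measure_union_le _ _
      _ = _ := by rw [hnull, add_zero]
  rw [hmu, Jv_biUnion_volume c hc0,
    ← ENNReal.ofReal_sum_of_nonneg (fun A _ => hc0 A),
    ENNReal.toReal_ofReal (Finset.sum_nonneg (fun A _ => hc0 A))]


theorem fracMeasure_universal_for_coverage
    (q : ℕ) (hq : 0 < q) (ψ : Finset (Fin q) → ℝ)
    (hψ0 : ψ ∅ = 0) (hψ1 : ψ univ = 1)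
    (hψalt : ∀ k : ℕ, 0 < k → ∀ A : Fin (k + 1) → Finset (Fin q),
      ∑ K : Finset (Fin k), (-1 : ℝ) ^ K.card *
        ψ (A 0 ∪ K.sup (fun i => A i.succ)) ≤ 0) :
    ∃ Q : Fin q → Set ℝ,
      (∀ i, MeasurableSet (Q i)) ∧
      Pairwise (Function.onFun Disjoint Q) ∧
      (⋃ i, Q i) = Set.univ ∧
      ∀ I : Finset (Fin q), ψ I = fracMeasure (⋃ i ∈ I, Q i) := by
  classical
  set c := cCoef ψ with hc
  have hc0 : ∀ A, 0 ≤ c A := cCoef_nonneg ψ hψ1 hψalt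
  have hpow : ∀ S : Finset (Fin q), ∑ A ∈ S.powerset, c A = 1 - ψ Sᶜ := by
    intro S
    simpa [hc, cCoef] using mobius_sum (fun B => 1 - ψ Bᶜ) S
  have hc1 : ∑ A : Finset (Fin q), c A = 1 := by
    rw [← Finset.powerset_univ, hpow, Finset.compl_univ, hψ0]
    norm_num
  have hce : c ∅ = 0 := by
    simp [hc, cCoef, Finset.compl_empty, hψ1]
  have hψI : ∀ I : Finset (Fin q),
      ψ I = ∑ A ∈ univ.filter (fun A => (A ∩ I).Nonempty), c A := by
    intro I
    have hsplit := Finset.sum_filter_add_sum_filter_not univ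
      (fun A : Finset (Fin q) => (A ∩ I).Nonempty) c
    have hnotset : univ.filter (fun A : Finset (Fin q) => ¬(A ∩ I).Nonempty)
        = Iᶜ.powerset := by
      ext A
      simp only [mem_filter, mem_univ, true_and, Finset.not_nonempty_iff_eq_empty,
        Finset.mem_powerset]
      rw [← Finset.disjoint_iff_inter_eq_empty]
      exact le_compl_iff_disjoint_right.symm
    have h2 : ∑ A ∈ Iᶜ.powerset, c A = 1 - ψ I := by rw [hpow, compl_compl]
    rw [hnotset, h2, hc1] at hsplit
    linarith
  set i0 : Fin q := ⟨0, hq⟩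
  refine ⟨Qset c i0, fun i => Qset_meas c i0 i, Qset_disjoint c hc0 i0,
    Qset_cover c i0, fun I => ?_⟩
  rw [Qset_fracMeasure c hc0 hc1 hce i0 I]
  exact hψI I
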